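/- Let I be the left ideal of ℍ[x] generated by x - i, and let b ∈ ℍ satisfy b² = -1 and b ≠ ±i. Then the constant polynomial b satisfies b ∈ I + I·b; explicitly, b = -(b(bi - ib)⁻¹ b)·(x - i) + (b(bi - ib)⁻¹)·(x - i)·b. -/

import Mathlib

open Polynomial

/-- The quaternion imaginary unit `i`. -/
def qI : Quaternion ℝ := ⟨0, 1, 0, 0⟩

lemma aux_noncomm {R} [Ring R] (x p q r : R) (h : x * q = q * x) :
    -(p * q) * (x - r) + p * (x - r) * q = p * (q * r - r * q) := by
  simp only [mul_sub, sub_mul, neg_mul, mul_assoc, h]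
  abel

lemma comm_ne_zero (b : Quaternion ℝ) (hb : b ^ 2 = -1)
    (hbi : b ≠ qI) (hbi' : b ≠ -qI) : b * qI - qI * b ≠ 0 := by
  intro h
  rw [sub_eq_zero] at h
  have h2 := hb
  rw [pow_two] at h2
  rw [Quaternion.ext_iff] at h h2
  simp [show qI.re = 0 from rfl, show qI.imI = 1 from rfl, show qI.imJ = 0 from rfl, show qI.imK = 0 from rfl, Quaternion.re_mul, Quaternion.imI_mul, Quaternion.imJ_mul,
    Quaternion.imK_mul, Quaternion.re_one, Quaternion.imI_one, Quaternion.imJ_one,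
    Quaternion.imK_one] at h h2
  have hK : b.imK = 0 := by linarith [h.1]
  have hJ : b.imJ = 0 := by linarith [h.2]
  obtain ⟨e1, e2, -, -⟩ := h2
  rw [hJ, hK] at e1 e2
  have ha : b.re = 0 := by nlinarith
  rw [ha] at e1
  have hx : b.imI * b.imI = 1 := by nlinarith
  rcases mul_self_eq_one_iff.mp hx with hx1 | hx1
  · exact hbi (QuaternionAlgebra.ext ha hx1 hJ hK)
  · apply hbi'
    have : -qI = (⟨0, -1, 0, 0⟩ : Quaternion ℝ) := by
      apply Quaternion.ext <;> simp [show qI.re = 0 from rfl, show qI.imI = 1 from rfl, show qI.imJ = 0 from rfl, show qI.imK = 0 from rfl]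
    rw [this]
    exact QuaternionAlgebra.ext ha hx1 hJ hK

theorem const_b_mem_I_add_Ib (b : Quaternion ℝ) (hb : b ^ 2 = -1)
    (hbi : b ≠ qI) (hbi' : b ≠ -qI) :
    (C b : Polynomial (Quaternion ℝ)) =
        -(C (b * (b * qI - qI * b)⁻¹ * b)) * (X - C qI) +
          (C (b * (b * qI - qI * b)⁻¹)) * (X - C qI) * C b ∧
    (∃ G₀ ∈ Ideal.span ({X - C qI} : Set (Polynomial (Quaternion ℝ))),
      ∃ G₁ ∈ Ideal.span ({X - C qI} : Set (Polynomial (Quaternion ℝ))),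
        (C b : Polynomial (Quaternion ℝ)) = G₀ + G₁ * C b) := by
  have hu : b * qI - qI * b ≠ 0 := comm_ne_zero b hb hbi hbi'
  have key : (C b : Polynomial (Quaternion ℝ)) =
      -(C (b * (b * qI - qI * b)⁻¹ * b)) * (X - C qI) +
        (C (b * (b * qI - qI * b)⁻¹)) * (X - C qI) * C b := by
    have h1 : (X : Polynomial (Quaternion ℝ)) * C b = C b * X := X_mul
    rw [show (C (b * (b * qI - qI * b)⁻¹ * b) : Polynomial (Quaternion ℝ)) =
        C (b * (b * qI - qI * b)⁻¹) * C b from by rw [← C_mul],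
      aux_noncomm X (C (b * (b * qI - qI * b)⁻¹)) (C b) (C qI) h1,
      ← C_mul, ← C_mul, ← C_sub, ← C_mul]
    congr 1
    rw [mul_assoc, inv_mul_cancel₀ hu, mul_one]
  refine ⟨key, -(C (b * (b * qI - qI * b)⁻¹ * b)) * (X - C qI), ?_,
    C (b * (b * qI - qI * b)⁻¹) * (X - C qI), ?_, key⟩
  · exact Ideal.mem_span_singleton'.mpr ⟨-(C (b * (b * qI - qI * b)⁻¹ * b)), rfl⟩
  · exact Ideal.mem_span_singleton'.mpr ⟨C (b * (b * qI - qI * b)⁻¹), rfl⟩
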